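/- Let n ≥ 2, let Λ₁ and Λ⁺ be as follows: Λ₁ = {(t,x,τ,ξ,t',x',τ',ξ') ∈ (ℝ×ℝ^n×ℝ×ℝ^n)² : ξ ≠ 0, x = x' + (t−t')ξ/‖ξ‖, (τ = ‖ξ‖ or τ = −‖ξ‖), τ' = −τ, ξ' = −ξ} and Λ⁺ = {(t,x,τ,ξ,z,η) ∈ (ℝ×ℝ^n×ℝ×ℝ^n)×(ℝ^n×ℝ^n) : η ≠ 0, x = z + tη/‖η‖, ξ = −η, τ = ‖η‖}. In the ambient space V = (ℝ×ℝ^n×ℝ×ℝ^n)³ × (ℝ^n×ℝ^n), set 𝒳 = Λ₁ × Λ⁺ (Λ₁ occupying the first two blocks of ℝ^{2(n+1)} and Λ⁺ the last block of ℝ^{2(n+1)} together with the ℝ^{2n} block) and 𝒴 = {(p₁,p₂,q₁,q₂) ∈ V : p₂ = q₁}. Then for every point w ∈ 𝒳 ∩ 𝒴, the tangent cone of 𝒳 ∩ 𝒴 at w equals the intersection of the tangent cone of 𝒳 at w with the tangent cone of 𝒴 at w: tangentConeAt ℝ (𝒳∩𝒴) w = (tangentConeAt ℝ 𝒳 w)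 ∩ (tangentConeAt ℝ 𝒴 w). -/

import Mathlib

open scoped Real

/-- Phase space point `(t, x, τ, ξ)` of `T^*ℝ^{1+n}`. -/
abbrev Phase (n : ℕ) :=
  ℝ × EuclideanSpace ℝ (Fin n) × ℝ × EuclideanSpace ℝ (Fin n)

/-- Point `(z, η)` of `T^*ℝ^n`. -/
abbrev Base (n : ℕ) :=
  EuclideanSpace ℝ (Fin n) × EuclideanSpace ℝ (Fin n)

/-- The flow-out Lagrangian `Λ₁` of the normal operator of the Minkowski light ray
transform. -/
def Lambda1 (n : ℕ) : Set (Phase n × Phase n) := fun p =>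
  p.1.2.2.2 ≠ 0 ∧
  p.1.2.1 = p.2.2.1 + (p.1.1 - p.2.1) • (‖p.1.2.2.2‖⁻¹ • p.1.2.2.2) ∧
  (p.1.2.2.1 = ‖p.1.2.2.2‖ ∨ p.1.2.2.1 = -‖p.1.2.2.2‖) ∧
  p.2.2.2.1 = -p.1.2.2.1 ∧
  p.2.2.2.2 = -p.1.2.2.2

/-- The twisted canonical relation `Λ⁺` of the forward half-wave parametrix. -/
def LambdaPlus (n : ℕ) : Set (Phase n × Base n) := fun p =>
  p.2.2 ≠ 0 ∧
  p.1.2.1 = p.2.1 + p.1.1 • (‖p.2.2‖⁻¹ • p.2.2) ∧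
  p.1.2.2.2 = -p.2.2 ∧
  p.1.2.2.1 = ‖p.2.2‖

open Filter Set ContinuousLinearMap

lemma mem_Lambda1_iff (n : ℕ) (p q : Phase n) :
    (p, q) ∈ Lambda1 n ↔
      (p.2.2.2 ≠ 0 ∧
       p.2.1 = q.2.1 + (p.1 - q.1) • (‖p.2.2.2‖⁻¹ • p.2.2.2) ∧
       (p.2.2.1 = ‖p.2.2.2‖ ∨ p.2.2.1 = -‖p.2.2.2‖) ∧
       q.2.2.1 = -p.2.2.1 ∧
       q.2.2.2 = -p.2.2.2) := Iff.rfl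

lemma mem_LambdaPlus_iff (n : ℕ) (p : Phase n) (q : Base n) :
    (p, q) ∈ LambdaPlus n ↔
      (q.2 ≠ 0 ∧
       p.2.1 = q.1 + p.1 • (‖q.2‖⁻¹ • q.2) ∧
       p.2.2.2 = -q.2 ∧
       p.2.2.1 = ‖q.2‖) := Iff.rfl

lemma tangentCone_singleton' {F : Type*} [NormedAddCommGroup F] [NormedSpace ℝ F]
    (p : F) {y : F} (hy : y ∈ tangentConeAt ℝ ({p} : Set F) p) : y = 0 := by
  rw [mem_tangentConeAt_iff_exists_seq] at hy
  obtain ⟨c, d, -, dtop, cdlim⟩ := hy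
  have h : (fun k => c k • d k) =ᶠ[atTop] fun _ => (0 : F) := by
    filter_upwards [dtop] with k hk
    have : d k = 0 := by simpa using hk
    simp [this]
  exact tendsto_nhds_unique (cdlim.congr' h) tendsto_const_nhds

lemma fderiv_eq_zero_of_eqOn_zero {E F : Type*} [NormedAddCommGroup E] [NormedSpace ℝ E]
    [NormedAddCommGroup F] [NormedSpace ℝ F] {s : Set E} {w : E} {f : E → F}
    {f' : E →L[ℝ] F} (hf : HasFDerivAt f f' w) (h0 : ∀ x ∈ s, f x = 0) (hw : f w = 0)
    {y : E} (hy : y ∈ tangentConeAt ℝ s w) : f' y = 0 := by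
  have h1 := (hf.hasFDerivWithinAt (s := s)).mapsTo_tangent_cone hy
  have h2 : f '' s ⊆ {(0 : F)} := by rintro _ ⟨x, hx, rfl⟩; simp [h0 x hx]
  have h3 : f' y ∈ tangentConeAt ℝ ({(0 : F)} : Set F) (f w) := tangentConeAt_mono h2 h1
  rw [hw] at h3
  exact tangentCone_singleton' _ h3


set_option maxHeartbeats 2000000 in
/-- Clean intersection of `Λ₁ × Λ⁺` with the partial diagonal, expressed through tangent
cones: at every intersection point, the tangent cone of the intersection is the
intersection of the tangent cones. -/
theorem clean_intersection (n : ℕ) (hn : 2 ≤ n) :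
    ∀ w ∈ ({v : Phase n × Phase n × Phase n × Base n |
              (v.1, v.2.1) ∈ Lambda1 n ∧ (v.2.2.1, v.2.2.2) ∈ LambdaPlus n} ∩
            {v : Phase n × Phase n × Phase n × Base n | v.2.1 = v.2.2.1}),
      tangentConeAt ℝ
          ({v : Phase n × Phase n × Phase n × Base n |
              (v.1, v.2.1) ∈ Lambda1 n ∧ (v.2.2.1, v.2.2.2) ∈ LambdaPlus n} ∩
           {v : Phase n × Phase n × Phase n × Base n | v.2.1 = v.2.2.1}) w
        = tangentConeAt ℝ
            {v : Phase n × Phase n × Phase n × Base n |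
              (v.1, v.2.1) ∈ Lambda1 n ∧ (v.2.2.1, v.2.2.2) ∈ LambdaPlus n} w ∩
          tangentConeAt ℝ
            {v : Phase n × Phase n × Phase n × Base n | v.2.1 = v.2.2.1} w := by
  intro w hw
  set X : Set (Phase n × Phase n × Phase n × Base n) :=
    {v : Phase n × Phase n × Phase n × Base n |
      (v.1, v.2.1) ∈ Lambda1 n ∧ (v.2.2.1, v.2.2.2) ∈ LambdaPlus n} with hXdef
  set Y : Set (Phase n × Phase n × Phase n × Base n) :=
    {v : Phase n × Phase n × Phase n × Base n | v.2.1 = v.2.2.1} with hYdef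
  obtain ⟨⟨hΛ1, hΛp⟩, hdiag⟩ := hw
  rw [mem_Lambda1_iff] at hΛ1
  rw [mem_LambdaPlus_iff] at hΛp
  apply Set.Subset.antisymm
  · exact subset_inter (tangentConeAt_mono inter_subset_left)
      (tangentConeAt_mono inter_subset_right)
  rintro y ⟨hyX, hyY⟩
  obtain ⟨h1ne, h1x, h1br, h1τ, h1ξ⟩ := hΛ1
  obtain ⟨hη0, hx3, hξ3, hτ3⟩ := hΛp
  have hdiag' : w.2.1 = w.2.2.1 := hdiag
  have hξ2 : w.2.1.2.2.2 = -w.2.2.2.2 := by rw [hdiag']; exact hξ3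
  have hτ2 : w.2.1.2.2.1 = ‖w.2.2.2.2‖ := by rw [hdiag']; exact hτ3
  have hξ1 : w.1.2.2.2 = w.2.2.2.2 := by
    have := hξ2.symm.trans h1ξ
    exact (neg_injective this).symm
  have hτ1 : w.1.2.2.1 = -‖w.2.2.2.2‖ := by
    have := hτ2.symm.trans h1τ
    linarith
  -- differentiability of the norm and of the direction map
  have hNd : DifferentiableAt ℝ (fun a : EuclideanSpace ℝ (Fin n) => ‖a‖) w.2.2.2.2 :=
    DifferentiableAt.norm ℝ differentiableAt_fun_id (by simpa using hη0)
  have hgd : DifferentiableAt ℝ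
      (fun a : EuclideanSpace ℝ (Fin n) => ‖a‖⁻¹ • a) w.2.2.2.2 :=
    (hNd.inv (norm_ne_zero_iff.2 hη0)).smul differentiableAt_fun_id
  obtain ⟨L, hN⟩ : ∃ L, HasFDerivAt (fun a : EuclideanSpace ℝ (Fin n) => ‖a‖) L w.2.2.2.2 :=
    ⟨_, hNd.hasFDerivAt⟩
  obtain ⟨B, hB⟩ : ∃ B, HasFDerivAt
      (fun a : EuclideanSpace ℝ (Fin n) => ‖a‖⁻¹ • a) B w.2.2.2.2 :=
    ⟨_, hgd.hasFDerivAt⟩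
  have hN1 : HasFDerivAt (fun a : EuclideanSpace ℝ (Fin n) => ‖a‖) L w.1.2.2.2 := by
    rw [hξ1]; exact hN
  have hB1 : HasFDerivAt (fun a : EuclideanSpace ℝ (Fin n) => ‖a‖⁻¹ • a) B w.1.2.2.2 := by
    rw [hξ1]; exact hB
  have hid := hasFDerivAt_id (𝕜 := ℝ) w
  -- restrict to the branch-selecting open set
  have hOopen : IsOpen {v : Phase n × Phase n × Phase n × Base n | v.1.2.2.1 < 0} := by
    have hc : Continuous fun v : Phase n × Phase n × Phase n × Base n => v.1.2.2.1 := by fun_prop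
    exact isOpen_lt hc continuous_const
  have hwO : w ∈ {v : Phase n × Phase n × Phase n × Base n | v.1.2.2.1 < 0} := by
    simp only [Set.mem_setOf_eq, hτ1]
    simpa using norm_pos_iff.2 hη0
  have hyXO : y ∈ tangentConeAt ℝ
      (X ∩ {v : Phase n × Phase n × Phase n × Base n | v.1.2.2.1 < 0}) w := by
    rwa [tangentConeAt_inter_nhds (hOopen.mem_nhds hwO)]
  have hbranch : ∀ v ∈ X ∩ {v : Phase n × Phase n × Phase n × Base n | v.1.2.2.1 < 0},
      v.1.2.2.1 = -‖v.1.2.2.2‖ := by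
    rintro v ⟨hvX, hvO⟩
    obtain ⟨hv1, -⟩ := hvX
    rw [mem_Lambda1_iff] at hv1
    rcases hv1.2.2.1 with h | h
    · exfalso
      have := norm_nonneg v.1.2.2.2
      simp only [Set.mem_setOf_eq] at hvO
      linarith
    · exact h
  -- Relation RY
  have RY : y.2.1 = y.2.2.1 := by
    have hf : HasFDerivAt
        (fun v : Phase n × Phase n × Phase n × Base n => v.2.1 - v.2.2.1) _ w :=
      (hid.snd.fst).sub (hid.snd.snd.fst)
    have hvan : ∀ v ∈ Y, v.2.1 - v.2.2.1 = 0 := fun v hv => sub_eq_zero.2 hv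
    have := fderiv_eq_zero_of_eqOn_zero hf hvan (sub_eq_zero.2 hdiag') hyY
    have h2 : y.2.1 - y.2.2.1 = 0 := by simpa using this
    exact sub_eq_zero.1 h2
  -- Relation R4
  have R4 : y.2.1.2.2.2 = -y.1.2.2.2 := by
    have hf : HasFDerivAt
        (fun v : Phase n × Phase n × Phase n × Base n => v.2.1.2.2.2 + v.1.2.2.2) _ w :=
      (hid.snd.fst.snd.snd.snd).add (hid.fst.snd.snd.snd)
    have hvan : ∀ v ∈ X, v.2.1.2.2.2 + v.1.2.2.2 = 0 := by
      intro v hv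
      obtain ⟨hv1, -⟩ := hv
      rw [mem_Lambda1_iff] at hv1
      rw [hv1.2.2.2.2]; abel
    have := fderiv_eq_zero_of_eqOn_zero hf hvan (by rw [h1ξ]; abel) hyX
    have h2 : y.2.1.2.2.2 + y.1.2.2.2 = 0 := by simpa using this
    linear_combination (norm := module) h2
  -- Relation R3
  have R3 : y.2.1.2.2.1 = -y.1.2.2.1 := by
    have hf : HasFDerivAt
        (fun v : Phase n × Phase n × Phase n × Base n => v.2.1.2.2.1 + v.1.2.2.1) _ w :=
      (hid.snd.fst.snd.snd.fst).add (hid.fst.snd.snd.fst)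
    have hvan : ∀ v ∈ X, v.2.1.2.2.1 + v.1.2.2.1 = 0 := by
      intro v hv
      obtain ⟨hv1, -⟩ := hv
      rw [mem_Lambda1_iff] at hv1
      rw [hv1.2.2.2.1]; ring
    have := fderiv_eq_zero_of_eqOn_zero hf hvan (by rw [h1τ]; ring) hyX
    have h2 : y.2.1.2.2.1 + y.1.2.2.1 = 0 := by simpa using this
    linarith
  -- Relation R6
  have R6 : y.2.2.1.2.2.2 = -y.2.2.2.2 := by
    have hf : HasFDerivAt
        (fun v : Phase n × Phase n × Phase n × Base n => v.2.2.1.2.2.2 + v.2.2.2.2) _ w :=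
      (hid.snd.snd.fst.snd.snd.snd).add (hid.snd.snd.snd.snd)
    have hvan : ∀ v ∈ X, v.2.2.1.2.2.2 + v.2.2.2.2 = 0 := by
      intro v hv
      obtain ⟨-, hv2⟩ := hv
      rw [mem_LambdaPlus_iff] at hv2
      rw [hv2.2.2.1]; abel
    have := fderiv_eq_zero_of_eqOn_zero hf hvan (by rw [hξ3]; abel) hyX
    have h2 : y.2.2.1.2.2.2 + y.2.2.2.2 = 0 := by simpa using this
    linear_combination (norm := module) h2
  -- Relation R7
  have R7 : y.2.2.1.2.2.1 = L y.2.2.2.2 := by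
    have hf : HasFDerivAt
        (fun v : Phase n × Phase n × Phase n × Base n => v.2.2.1.2.2.1 - ‖v.2.2.2.2‖) _ w :=
      (hid.snd.snd.fst.snd.snd.fst).sub (hN.comp w (hid.snd.snd.snd.snd))
    have hvan : ∀ v ∈ X, v.2.2.1.2.2.1 - ‖v.2.2.2.2‖ = 0 := by
      intro v hv
      obtain ⟨-, hv2⟩ := hv
      rw [mem_LambdaPlus_iff] at hv2
      rw [hv2.2.2.2]; ring
    have := fderiv_eq_zero_of_eqOn_zero hf hvan (by rw [hτ3]; ring) hyX
    have h2 : y.2.2.1.2.2.1 - L y.2.2.2.2 = 0 := by simpa using this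
    linarith
  -- Relation R2
  have R2 : y.1.2.2.1 = -(L y.1.2.2.2) := by
    have hf : HasFDerivAt
        (fun v : Phase n × Phase n × Phase n × Base n => v.1.2.2.1 + ‖v.1.2.2.2‖) _ w :=
      (hid.fst.snd.snd.fst).add (hN1.comp w (hid.fst.snd.snd.snd))
    have hvan : ∀ v ∈ X ∩ {v : Phase n × Phase n × Phase n × Base n | v.1.2.2.1 < 0},
        v.1.2.2.1 + ‖v.1.2.2.2‖ = 0 := by
      intro v hv
      rw [hbranch v hv]; ring
    have := fderiv_eq_zero_of_eqOn_zero hf hvan (by rw [hτ1, hξ1]; ring) hyXO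
    have h2 : y.1.2.2.1 + L y.1.2.2.2 = 0 := by simpa using this
    linarith
  -- Relation R1
  have R1 : y.1.2.1 = y.2.1.2.1 + ((w.1.1 - w.2.1.1) • B y.1.2.2.2
      + (y.1.1 - y.2.1.1) • (‖w.1.2.2.2‖⁻¹ • w.1.2.2.2)) := by
    have hf : HasFDerivAt
        (fun v : Phase n × Phase n × Phase n × Base n =>
          v.1.2.1 - v.2.1.2.1 - (v.1.1 - v.2.1.1) • (‖v.1.2.2.2‖⁻¹ • v.1.2.2.2)) _ w :=
      ((hid.fst.snd.fst).sub (hid.snd.fst.snd.fst)).sub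
        (((hid.fst.fst).sub (hid.snd.fst.fst)).smul (hB1.comp w (hid.fst.snd.snd.snd) :))
    have hvan : ∀ v ∈ X,
        v.1.2.1 - v.2.1.2.1 - (v.1.1 - v.2.1.1) • (‖v.1.2.2.2‖⁻¹ • v.1.2.2.2) = 0 := by
      intro v hv
      obtain ⟨hv1, -⟩ := hv
      rw [mem_Lambda1_iff] at hv1
      rw [hv1.2.1]; abel
    have := fderiv_eq_zero_of_eqOn_zero hf hvan (by rw [h1x]; abel) hyX
    have h2 : y.1.2.1 - y.2.1.2.1 - ((w.1.1 - w.2.1.1) • B y.1.2.2.2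
        + (y.1.1 - y.2.1.1) • (‖w.1.2.2.2‖⁻¹ • w.1.2.2.2)) = 0 := by simpa using this
    linear_combination (norm := module) h2
  -- Relation R5
  have R5 : y.2.2.1.2.1 = y.2.2.2.1 + (w.2.2.1.1 • B y.2.2.2.2
      + y.2.2.1.1 • (‖w.2.2.2.2‖⁻¹ • w.2.2.2.2)) := by
    have hf : HasFDerivAt
        (fun v : Phase n × Phase n × Phase n × Base n =>
          v.2.2.1.2.1 - v.2.2.2.1 - v.2.2.1.1 • (‖v.2.2.2.2‖⁻¹ • v.2.2.2.2)) _ w :=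
      ((hid.snd.snd.fst.snd.fst).sub (hid.snd.snd.snd.fst)).sub
        ((hid.snd.snd.fst.fst).smul (hB.comp w (hid.snd.snd.snd.snd) :))
    have hvan : ∀ v ∈ X,
        v.2.2.1.2.1 - v.2.2.2.1 - v.2.2.1.1 • (‖v.2.2.2.2‖⁻¹ • v.2.2.2.2) = 0 := by
      intro v hv
      obtain ⟨-, hv2⟩ := hv
      rw [mem_LambdaPlus_iff] at hv2
      rw [hv2.2.1]; abel
    have := fderiv_eq_zero_of_eqOn_zero hf hvan (by rw [hx3]; abel) hyX
    have h2 : y.2.2.1.2.1 - y.2.2.2.1 - (w.2.2.1.1 • B y.2.2.2.2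
        + y.2.2.1.1 • (‖w.2.2.2.2‖⁻¹ • w.2.2.2.2)) = 0 := by simpa using this
    linear_combination (norm := module) h2
  -- consequences of the relations
  have hyξ : y.1.2.2.2 = y.2.2.2.2 := by
    have h1 : y.2.1.2.2.2 = y.2.2.1.2.2.2 := by rw [RY]
    rw [R4, R6] at h1
    exact neg_injective h1
  have hyξ2 : y.2.1.2.2.2 = -y.2.2.2.2 := by rw [R4, hyξ]
  have hyτ1 : y.1.2.2.1 = -(L y.2.2.2.2) := by rw [R2, hyξ]
  have hyτ2 : y.2.1.2.2.1 = L y.2.2.2.2 := by rw [R3, hyτ1]; ring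
  have hyt3 : y.2.2.1.1 = y.2.1.1 := by rw [RY]
  have hyx3 : y.2.2.1.2.1 = y.2.1.2.1 := by rw [RY]
  have hwt3 : w.2.2.1.1 = w.2.1.1 := by rw [hdiag']
  have hx2' : y.2.1.2.1 = y.2.2.2.1 + (w.2.1.1 • B y.2.2.2.2
      + y.2.1.1 • (‖w.2.2.2.2‖⁻¹ • w.2.2.2.2)) := by
    rw [← hyx3, R5, hwt3, hyt3]
  have hx1' : y.1.2.1 = y.2.2.2.1 + (w.1.1 • B y.2.2.2.2
      + y.1.1 • (‖w.2.2.2.2‖⁻¹ • w.2.2.2.2)) := by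
    rw [R1, hx2', hξ1, hyξ]
    module
  -- the parametrization of the intersection
  set φ : (ℝ × ℝ × EuclideanSpace ℝ (Fin n) × EuclideanSpace ℝ (Fin n)) →
      Phase n × Phase n × Phase n × Base n := fun u =>
    ((u.1, u.2.2.1 + u.1 • (‖u.2.2.2‖⁻¹ • u.2.2.2), -‖u.2.2.2‖, u.2.2.2),
     (u.2.1, u.2.2.1 + u.2.1 • (‖u.2.2.2‖⁻¹ • u.2.2.2), ‖u.2.2.2‖, -u.2.2.2),
     (u.2.1, u.2.2.1 + u.2.1 • (‖u.2.2.2‖⁻¹ • u.2.2.2), ‖u.2.2.2‖, -u.2.2.2),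
     (u.2.2.1, u.2.2.2)) with hφdef
  set u₀ : ℝ × ℝ × EuclideanSpace ℝ (Fin n) × EuclideanSpace ℝ (Fin n) :=
    (w.1.1, w.2.1.1, w.2.2.2.1, w.2.2.2.2) with hu₀def
  set U : Set (ℝ × ℝ × EuclideanSpace ℝ (Fin n) × EuclideanSpace ℝ (Fin n)) :=
    {u | u.2.2.2 ≠ 0} with hUdef
  have hUopen : IsOpen U := by
    have hc : Continuous fun u : ℝ × ℝ × EuclideanSpace ℝ (Fin n) × EuclideanSpace ℝ (Fin n) =>
      u.2.2.2 := by fun_prop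
    exact isOpen_ne.preimage hc
  have hu₀U : u₀ ∈ U := hη0
  -- φ(U) is contained in the intersection
  have himg : φ '' U ⊆ X ∩ Y := by
    rintro _ ⟨u, hu, rfl⟩
    have hu' : u.2.2.2 ≠ 0 := hu
    refine ⟨⟨⟨hu', ?_, Or.inr rfl, (neg_neg _).symm, rfl⟩, ⟨hu', rfl, rfl, rfl⟩⟩, rfl⟩
    show u.2.2.1 + u.1 • (‖u.2.2.2‖⁻¹ • u.2.2.2) =
      u.2.2.1 + u.2.1 • (‖u.2.2.2‖⁻¹ • u.2.2.2)
        + (u.1 - u.2.1) • (‖u.2.2.2‖⁻¹ • u.2.2.2)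
    module
  -- φ(u₀) = w
  have hx2w : w.2.1.2.1 = w.2.2.2.1 + w.2.1.1 • (‖w.2.2.2.2‖⁻¹ • w.2.2.2.2) := by
    rw [hdiag']; exact hx3
  have hx1w : w.1.2.1 = w.2.2.2.1 + w.1.1 • (‖w.2.2.2.2‖⁻¹ • w.2.2.2.2) := by
    rw [h1x, hξ1, hx2w]
    module
  have hφw : φ u₀ = w := by
    rw [hφdef, hu₀def]
    refine Prod.ext ?_ (Prod.ext ?_ (Prod.ext ?_ ?_))
    · exact Prod.ext rfl (Prod.ext hx1w.symm (Prod.ext hτ1.symm hξ1.symm))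
    · exact Prod.ext rfl (Prod.ext hx2w.symm (Prod.ext hτ2.symm hξ2.symm))
    · rw [← hdiag']
      exact Prod.ext rfl (Prod.ext hx2w.symm (Prod.ext hτ2.symm hξ2.symm))
    · rfl
  -- derivative of φ at u₀
  have hidu := hasFDerivAt_id (𝕜 := ℝ) u₀
  have hgu : HasFDerivAt
      (fun u : ℝ × ℝ × EuclideanSpace ℝ (Fin n) × EuclideanSpace ℝ (Fin n) =>
        ‖u.2.2.2‖⁻¹ • u.2.2.2) _ u₀ := (hB.comp u₀ (hidu.snd.snd.snd) :)
  have hNu : HasFDerivAt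
      (fun u : ℝ × ℝ × EuclideanSpace ℝ (Fin n) × EuclideanSpace ℝ (Fin n) =>
        ‖u.2.2.2‖) _ u₀ := hN.comp u₀ (hidu.snd.snd.snd)
  have hφd : HasFDerivAt φ _ u₀ :=
    (hidu.fst.prodMk
      (((hidu.snd.snd.fst).add ((hidu.fst).smul hgu)).prodMk
        ((hNu.neg).prodMk (hidu.snd.snd.snd)))).prodMk
    (((hidu.snd.fst).prodMk
      (((hidu.snd.snd.fst).add ((hidu.snd.fst).smul hgu)).prodMk
        (hNu.prodMk (hidu.snd.snd.snd).neg))).prodMk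
    (((hidu.snd.fst).prodMk
      (((hidu.snd.snd.fst).add ((hidu.snd.fst).smul hgu)).prodMk
        (hNu.prodMk (hidu.snd.snd.snd).neg))).prodMk
      ((hidu.snd.snd.fst).prodMk (hidu.snd.snd.snd))))
  -- the tangent cone of U at u₀ is everything
  have hUcone : tangentConeAt ℝ U u₀ = univ := by
    rw [← Set.univ_inter U, tangentConeAt_inter_nhds (hUopen.mem_nhds hu₀U), tangentConeAt_univ]
  set y' : ℝ × ℝ × EuclideanSpace ℝ (Fin n) × EuclideanSpace ℝ (Fin n) :=
    (y.1.1, y.2.1.1, y.2.2.2.1, y.2.2.2.2) with hy'def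
  have hy'mem : y' ∈ tangentConeAt ℝ U u₀ := by rw [hUcone]; trivial
  have hmaps := (hφd.hasFDerivWithinAt (s := U)).mapsTo_tangent_cone hy'mem
  rw [hφw] at hmaps
  have hfinal := tangentConeAt_mono himg hmaps
  convert hfinal using 2
  simp only [hy'def, ContinuousLinearMap.prod_apply, ContinuousLinearMap.add_apply,
    ContinuousLinearMap.coe_comp', Function.comp_apply, ContinuousLinearMap.coe_fst',
    ContinuousLinearMap.coe_snd', ContinuousLinearMap.neg_apply,
    ContinuousLinearMap.smul_apply, ContinuousLinearMap.smulRight_apply,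
    ContinuousLinearMap.coe_id', id_eq]
  refine Prod.ext ?_ (Prod.ext ?_ (Prod.ext ?_ ?_))
  · exact Prod.ext rfl (Prod.ext hx1' (Prod.ext hyτ1 hyξ))
  · exact Prod.ext rfl (Prod.ext hx2' (Prod.ext hyτ2 hyξ2))
  · refine Prod.ext hyt3 (Prod.ext ?_ (Prod.ext R7 R6))
    rw [hyx3]; exact hx2'
  · rfl
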